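/- Let Ω = [a,b] ⊂ ℝ compact, X ⊂ ℝ compact, Q a parameter set, and suppose for η > sqrt(15/8)(b−a) that sup_{q∈Q} ∫_Ω e^{η|x|} |f_q(x)| dx < ∞. Define h_{(q,x)}(z) = (1/2π) e^{−izx} \hat{f_q}(z) with \hat{f_q}(z) = ∫_Ω e^{izy} f_q(y) dy. Then z ↦ \hat{f_q}(z) is analytic on the Bernstein ellipse B(Ω, ρ(η)) with ρ(η) = 2η/(b−a) + sqrt((2η/(b−a))² + 1) > 4, and sup over (q,x,z) ∈ Q × X × B(Ω, ρ(η)) of |h_{(q,x)}(z)| is bounded by (1/2π) e^{η max(−inf X, sup X)} sup_q ∫_Ω e^{η|x|}|f_q(x)| dx. -/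

import Mathlib

open MeasureTheory Complex

def bernsteinEllipse (ρ : ℝ) : Set ℂ :=
  {z : ℂ | ∃ w : ℂ, 1 ≤ ‖w‖ ∧ ‖w‖ < ρ ∧ z = (w + w⁻¹) / 2}

noncomputable def tauAB (a b : ℝ) (x : ℂ) : ℂ :=
  (b : ℂ) + ((a - b : ℝ) : ℂ) / 2 * (1 - (x.re : ℂ)) +
    Complex.I * ((b - a : ℝ) : ℂ) / 2 * (x.im : ℂ)

noncomputable def genBernsteinEllipse (a b ρ : ℝ) : Set ℂ :=
  tauAB a b '' bernsteinEllipse ρ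

lemma exp_re_aux (z : ℂ) (y : ℝ) : (I*z*(y:ℂ)).re = -z.im * y := by
  simp [Complex.mul_re, Complex.mul_im]

/-- Points of the generalized Bernstein ellipse with `ρ = t + √(t²+1)`,
`t = 2η/(b-a)`, have imaginary part bounded by `η`. -/
lemma genBE_im_le (a b η : ℝ) (hab : a < b) (hη : 0 < η) :
    ∀ z ∈ genBernsteinEllipse a b (2*η/(b-a) + Real.sqrt ((2*η/(b-a))^2 + 1)),
      |z.im| ≤ η := by
  rintro z ⟨x, ⟨w, hw1, hwρ, rfl⟩, rfl⟩
  have hw0 : w ≠ 0 := by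
    intro h; rw [h] at hw1; simp at hw1; linarith
  set t : ℝ := 2*η/(b-a) with ht
  have hba : (0:ℝ) < b - a := sub_pos.2 hab
  have htpos : 0 < t := by positivity
  set s : ℝ := Real.sqrt (t^2 + 1) with hs
  have hs2 : s^2 = t^2 + 1 := Real.sq_sqrt (by positivity)
  have hspos : 0 < s := Real.sqrt_pos.2 (by positivity)
  set r : ℝ := ‖w‖ with hr
  have hr1 : 1 ≤ r := hw1
  have hrpos : 0 < r := lt_of_lt_of_le one_pos hr1
  -- the imaginary part of tauAB
  have him : (tauAB a b ((w + w⁻¹)/2)).im = (b-a)/2 * ((w + w⁻¹)/2).im := by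
    simp [tauAB]
  -- bound on the imaginary part of (w + w⁻¹)/2
  have hxim : |((w + w⁻¹)/2).im| ≤ (r - r⁻¹)/2 := by
    have h1 : ((w + w⁻¹)/2).im = w.im * (1 - (r^2)⁻¹) / 2 := by
      rw [Complex.div_im]
      simp [Complex.add_im, Complex.inv_im, Complex.normSq_eq_norm_sq, ← hr]
      field_simp
      ring
    rw [h1, abs_div, abs_mul]
    have h2 : |w.im| ≤ r := Complex.abs_im_le_norm w
    have h3 : (0:ℝ) ≤ 1 - (r^2)⁻¹ := by
      have : (1:ℝ) ≤ r^2 := by nlinarith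
      have h5 : (r^2)⁻¹ ≤ 1⁻¹ := by
        apply inv_anti₀ one_pos this
      simp at h5; linarith
    rw [_root_.abs_of_nonneg h3]
    have : |w.im| * (1 - (r^2)⁻¹) ≤ r * (1 - (r^2)⁻¹) :=
      mul_le_mul_of_nonneg_right h2 h3
    have hr2 : r * (1 - (r^2)⁻¹) = r - r⁻¹ := by field_simp
    rw [_root_.abs_of_pos (by norm_num : (0:ℝ) < 2)]
    calc |w.im| * (1 - (r^2)⁻¹) / 2 ≤ r * (1 - (r^2)⁻¹) / 2 := by linarith
    _ = (r - r⁻¹)/2 := by rw [hr2]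
  -- r - r⁻¹ ≤ 2 t
  have hρpos : 0 < t + s := by positivity
  have hinv : (t + s)⁻¹ = s - t := by
    have : (t + s) * (s - t) = 1 := by nlinarith
    field_simp
    nlinarith
  have hmono : r - r⁻¹ ≤ (t + s) - (t + s)⁻¹ := by
    have hrle : r ≤ t + s := le_of_lt hwρ
    have : (t + s)⁻¹ ≤ r⁻¹ := by
      apply inv_anti₀ hrpos hrle
    linarith
  have hfin : r - r⁻¹ ≤ 2 * t := by
    rw [hinv] at hmono; linarith
  -- conclude
  rw [him]
  rw [abs_mul, _root_.abs_of_pos (by positivity : (0:ℝ) < (b-a)/2)]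
  calc (b-a)/2 * |((w + w⁻¹)/2).im| ≤ (b-a)/2 * ((r - r⁻¹)/2) := by
        apply mul_le_mul_of_nonneg_left hxim (by positivity)
  _ ≤ (b-a)/2 * t := by
        apply mul_le_mul_of_nonneg_left _ (by positivity)
        linarith
  _ = η := by rw [ht]; field_simp

/-- The Fourier-type integral is entire. -/
lemma fourier_entire (a b : ℝ) (g : ℝ → ℂ) (hg : IntegrableOn g (Set.Icc a b)) :
    Differentiable ℂ (fun z : ℂ => ∫ y in Set.Icc a b, Complex.exp (I * z * y) * g y) := by
  intro z₀
  set M : ℝ := max |a| |b| with hM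
  have hMnn : 0 ≤ M := le_trans (abs_nonneg a) (le_max_left _ _)
  have hyM : ∀ y ∈ Set.Icc a b, |y| ≤ M := by
    intro y hy
    rw [abs_le]
    constructor
    · calc -M ≤ -|a| := neg_le_neg (le_max_left _ _)
      _ ≤ a := neg_abs_le a
      _ ≤ y := hy.1
    · calc y ≤ b := hy.2
      _ ≤ |b| := le_abs_self b
      _ ≤ M := le_max_right _ _
  set C : ℝ := ‖z₀‖ + 1 with hC
  have hexp_bound : ∀ z ∈ Metric.ball z₀ 1, ∀ y ∈ Set.Icc a b,
      ‖Complex.exp (I * z * (y:ℂ))‖ ≤ Real.exp (C * M) := by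
    intro z hz y hy
    rw [Complex.norm_exp, exp_re_aux]
    apply Real.exp_le_exp.2
    have h1 : |z.im| ≤ C := by
      have := Complex.abs_im_le_norm z
      have h2 : ‖z‖ ≤ C := by
        have h4 := norm_sub_norm_le z z₀
        have h3 : ‖z - z₀‖ < 1 := by
          rwa [Metric.mem_ball, dist_eq_norm] at hz
        rw [hC]; linarith
      linarith
    calc -z.im * y ≤ |(-z.im) * y| := le_abs_self _
    _ = |z.im| * |y| := by rw [abs_mul, abs_neg]
    _ ≤ C * M := mul_le_mul h1 (hyM y hy) (abs_nonneg _) (by positivity)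
  -- the derivative candidate
  set F' : ℂ → ℝ → ℂ := fun z y => (I * y) * Complex.exp (I * z * (y:ℂ)) * g y with hF'
  have hmeas : ∀ z : ℂ, AEStronglyMeasurable (fun y : ℝ => Complex.exp (I * z * (y:ℂ)) * g y)
      (volume.restrict (Set.Icc a b)) := by
    intro z
    exact ((Complex.continuous_exp.comp (by continuity)).aestronglyMeasurable).mul
      hg.aestronglyMeasurable
  have hcont : Continuous (fun y : ℝ => (I * (y:ℂ)) * Complex.exp (I * z₀ * (y:ℂ))) := by
    exact (continuous_const.mul Complex.continuous_ofReal).mul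
      (Complex.continuous_exp.comp (by continuity))
  have hmeas' : AEStronglyMeasurable (F' z₀) (volume.restrict (Set.Icc a b)) :=
    hcont.aestronglyMeasurable.mul hg.aestronglyMeasurable
  have hint : Integrable (fun y : ℝ => Complex.exp (I * z₀ * (y:ℂ)) * g y)
      (volume.restrict (Set.Icc a b)) := by
    apply Integrable.mono ((hg.norm.const_mul (Real.exp (C * M))))
      (hmeas z₀)
    rw [ae_restrict_iff' measurableSet_Icc]
    filter_upwards with y hy
    rw [norm_mul]
    have h1 := hexp_bound z₀ (Metric.mem_ball_self one_pos) y hy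
    have : ‖Complex.exp (I * z₀ * (y:ℂ))‖ * ‖g y‖ ≤ Real.exp (C*M) * ‖g y‖ :=
      mul_le_mul_of_nonneg_right h1 (norm_nonneg _)
    calc ‖Complex.exp (I * z₀ * (y:ℂ))‖ * ‖g y‖ ≤ Real.exp (C*M) * ‖g y‖ := this
    _ ≤ ‖Real.exp (C*M) * ‖g y‖‖ := le_abs_self _
  have key := hasDerivAt_integral_of_dominated_loc_of_deriv_le
    (F := fun z (y : ℝ) => Complex.exp (I * z * (y:ℂ)) * g y) (F' := F')
    (μ := volume.restrict (Set.Icc a b)) (x₀ := z₀)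
    (bound := fun y => M * Real.exp (C * M) * ‖g y‖)
    (Metric.ball_mem_nhds z₀ one_pos) (Filter.Eventually.of_forall hmeas) hint hmeas'
    ?_ ((hg.norm.const_mul (M * Real.exp (C * M)))) ?_
  · exact key.2.differentiableAt
  · rw [ae_restrict_iff' measurableSet_Icc]
    filter_upwards with y hy z hz
    rw [hF']
    have h1 : ‖I * (y:ℂ)‖ = |y| := by
      simp
    rw [norm_mul, norm_mul, h1]
    have := hexp_bound z hz y hy
    have hg1 : (0:ℝ) ≤ ‖g y‖ := norm_nonneg _
    have := mul_le_mul (mul_le_mul (hyM y hy) this (norm_nonneg _) hMnn)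
      (le_refl ‖g y‖) hg1 (by positivity)
    linarith
  · rw [ae_restrict_iff' measurableSet_Icc]
    filter_upwards with y hy z hz
    have h1 : HasDerivAt (fun z : ℂ => I * z * (y:ℂ)) (I * y) z := by
      simpa using ((hasDerivAt_id z).const_mul I).mul_const (y:ℂ)
    have h2 : HasDerivAt (fun z : ℂ => Complex.exp (I * z * (y:ℂ)))
        (Complex.exp (I * z * (y:ℂ)) * (I * y)) z :=
      (Complex.hasDerivAt_exp (I * z * (y:ℂ))).comp z h1
    have h3 := h2.mul_const (g y)
    have e : F' z y = Complex.exp (I * z * (y:ℂ)) * (I * y) * g y := by rw [hF']; ring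
    rw [e]; exact h3

theorem magic_points_fourier_transform_analyticity_and_bound
    {Q : Type*} (a b : ℝ) (hab : a < b) (X : Set ℝ) (hX : IsCompact X)
    (η K : ℝ) (hη : Real.sqrt (15/8) * (b - a) < η)
    (f : Q → ℝ → ℂ)
    (hfint : ∀ q, IntegrableOn (f q) (Set.Icc a b))
    (hfexp : ∀ q, IntegrableOn (fun x => Real.exp (η * |x|) * ‖f q x‖) (Set.Icc a b))
    (hK : ∀ q, (∫ x in Set.Icc a b, Real.exp (η * |x|) * ‖f q x‖) ≤ K) :
    4 < 2*η/(b-a) + Real.sqrt ((2*η/(b-a))^2 + 1) ∧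
    (∀ q : Q, DifferentiableOn ℂ
      (fun z : ℂ => ∫ y in Set.Icc a b, Complex.exp (I * z * y) * f q y)
      (genBernsteinEllipse a b (2*η/(b-a) + Real.sqrt ((2*η/(b-a))^2 + 1)))) ∧
    (∀ (q : Q), ∀ x ∈ X,
      ∀ z ∈ genBernsteinEllipse a b (2*η/(b-a) + Real.sqrt ((2*η/(b-a))^2 + 1)),
        ‖(1 / (2 * (Real.pi : ℂ))) * Complex.exp (-I * z * x) *
            ∫ y in Set.Icc a b, Complex.exp (I * z * y) * f q y‖
          ≤ (1 / (2 * Real.pi)) * Real.exp (η * max (-sInf X) (sSup X)) * K) := by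
  have hba : (0:ℝ) < b - a := sub_pos.2 hab
  have hsq : (1.3:ℝ) < Real.sqrt (15/8) := by
    rw [show (1.3:ℝ) = Real.sqrt (1.3^2) by rw [Real.sqrt_sq]; norm_num]
    apply Real.sqrt_lt_sqrt (by norm_num) (by norm_num)
  have hηpos : 0 < η := lt_trans (by positivity) hη
  set t : ℝ := 2*η/(b-a) with ht
  have htpos : 0 < t := by positivity
  have ht26 : (2.6:ℝ) < t := by
    rw [ht, lt_div_iff₀ hba]
    nlinarith [Real.sqrt_nonneg (15/8:ℝ)]
  have hts : t ≤ Real.sqrt (t^2 + 1) := by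
    rw [show t = Real.sqrt (t^2) by rw [Real.sqrt_sq htpos.le]]
    exact Real.sqrt_le_sqrt (by nlinarith [Real.sq_sqrt (by positivity : (0:ℝ) ≤ t^2)])
  refine ⟨by nlinarith, fun q => (fourier_entire a b (f q) (hfint q)).differentiableOn, ?_⟩
  intro q x hx z hz
  have hzim : |z.im| ≤ η := genBE_im_le a b η hab hηpos z hz
  -- bound on the exponential factor
  have hXne : X.Nonempty := ⟨x, hx⟩
  have hxabs : |x| ≤ max (-sInf X) (sSup X) := by
    rw [abs_le]
    constructor
    · have : sInf X ≤ x := csInf_le hX.bddBelow hx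
      have : -x ≤ -sInf X := by linarith
      have h2 : -sInf X ≤ max (-sInf X) (sSup X) := le_max_left _ _
      linarith
    · have : x ≤ sSup X := le_csSup hX.bddAbove hx
      have h2 : sSup X ≤ max (-sInf X) (sSup X) := le_max_right _ _
      linarith
  have hexp1 : ‖Complex.exp (-I * z * (x:ℂ))‖ ≤ Real.exp (η * max (-sInf X) (sSup X)) := by
    rw [Complex.norm_exp]
    apply Real.exp_le_exp.2
    have hre : (-I * z * (x:ℂ)).re = z.im * x := by
      simp [Complex.mul_re, Complex.mul_im]
    rw [hre]
    calc z.im * x ≤ |z.im * x| := le_abs_self _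
    _ = |z.im| * |x| := abs_mul _ _
    _ ≤ η * max (-sInf X) (sSup X) :=
        mul_le_mul hzim hxabs (abs_nonneg _) hηpos.le
  -- bound on the integral
  have hint_bound : ‖∫ y in Set.Icc a b, Complex.exp (I * z * (y:ℂ)) * f q y‖ ≤ K := by
    have h1 : ‖∫ y in Set.Icc a b, Complex.exp (I * z * (y:ℂ)) * f q y‖
        ≤ ∫ y in Set.Icc a b, Real.exp (η * |y|) * ‖f q y‖ := by
      apply norm_integral_le_of_norm_le (hfexp q)
      rw [ae_restrict_iff' measurableSet_Icc]
      filter_upwards with y hy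
      rw [norm_mul, Complex.norm_exp, exp_re_aux]
      apply mul_le_mul_of_nonneg_right _ (norm_nonneg _)
      apply Real.exp_le_exp.2
      calc -z.im * y ≤ |(-z.im) * y| := le_abs_self _
      _ = |z.im| * |y| := by rw [abs_mul, abs_neg]
      _ ≤ η * |y| := mul_le_mul_of_nonneg_right hzim (abs_nonneg _)
    exact h1.trans (hK q)
  -- combine
  have hKnn : 0 ≤ K := le_trans (norm_nonneg _) hint_bound
  have hc : ‖(1 / (2 * (Real.pi : ℂ)))‖ = 1 / (2 * Real.pi) := by
    rw [norm_div, norm_one, norm_mul]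
    simp [Complex.norm_real, abs_of_pos Real.pi_pos]
  rw [norm_mul, norm_mul, hc]
  calc 1 / (2*Real.pi) * ‖Complex.exp (-I * z * (x:ℂ))‖ *
        ‖∫ y in Set.Icc a b, Complex.exp (I * z * (y:ℂ)) * f q y‖
      ≤ 1 / (2*Real.pi) * Real.exp (η * max (-sInf X) (sSup X)) * K := by
        apply mul_le_mul
        · exact mul_le_mul_of_nonneg_left hexp1 (by positivity)
        · exact hint_bound
        · exact norm_nonneg _
        · positivity
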